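/- Let N be a CCI-envelope of a CCI X of size k ≥ 4 with Y = E(N)\X, and let (J; {x}, X₂, ..., X_m) be a hyperplane-partition with a singleton block {x}. Then for any cohyperplane-partition (J*; Z₁, ..., Z_p) with J* ≠ J, if x ∈ Z_i for some block Z_i with |Z_i| = 1, and the partition (J*; Z₁,...,Z_p) has at least two singleton blocks, then N has a CCI of size k−2. -/

import Mathlib

open Set

namespace Matroid

variable {α : Type*}

/-- A circuit: a minimal dependent set. -/
def IsCircuit' (M : Matroid α) (C : Set α) : Prop :=
  C ⊆ M.E ∧ ¬ M.Indep C ∧ ∀ D, D ⊂ C → M.Indep D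

/-- A cocircuit: a circuit of the dual matroid. -/
def IsCocircuit' (M : Matroid α) (C : Set α) : Prop :=
  M✶.IsCircuit' C

/-- A circuit-cocircuit intersection (CCI). -/
def IsCCI (M : Matroid α) (X : Set α) : Prop :=
  ∃ C K, M.IsCircuit' C ∧ M.IsCocircuit' K ∧ X = C ∩ K

/-- A hyperplane: a maximal proper flat. -/
def IsHyperplane (M : Matroid α) (H : Set α) : Prop :=
  M.IsFlat H ∧ H ≠ M.E ∧ ∀ F, M.IsFlat F → H ⊂ F → F = M.E

/-- The rank of a set: the largest size of an independent subset. -/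
noncomputable def rk (M : Matroid α) (A : Set α) : ℕ :=
  sSup {n | ∃ I, I ⊆ A ∧ M.Indep I ∧ I.ncard = n}

/-- The rank of a matroid. -/
noncomputable def rank (M : Matroid α) : ℕ := M.rk M.E

/-- Deletion of a set from a matroid. -/
def del (M : Matroid α) (D : Set α) : Matroid α := M.restrict (M.E \ D)

/-- Contraction of a set in a matroid. -/
def con (M : Matroid α) (C : Set α) : Matroid α := (M✶.restrict (M.E \ C))✶

/-- `N` is a minor of `M` if it is obtained by a contraction followed by a deletion. -/
def IsMinor' (N M : Matroid α) : Prop := ∃ C D, N = (M.con C).del D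

end Matroid

open Matroid

lemma aux_flat_closure (M : Matroid α) (X : Set α) : M.IsFlat (M.closure X) := by
  rw [Matroid.closure_def, sInter_eq_iInter]
  have : Nonempty {F // F ∈ {F | M.IsFlat F ∧ X ∩ M.E ⊆ F}} :=
    ⟨⟨M.E, M.ground_isFlat, inter_subset_right⟩⟩
  exact Matroid.IsFlat.iInter fun F ↦ F.2.1

lemma aux_compl_hyperplane_isCocircuit (M : Matroid α) (H : Set α)
    (hH : M.IsHyperplane H) : M.IsCocircuit' (M.E \ H) := by
  obtain ⟨hF, hne, hmax⟩ := hH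
  refine ⟨by simp [diff_subset], ?_, ?_⟩
  · intro hcoind
    have hsp : M.Spanning H := by
      have := (Matroid.coindep_iff_compl_spanning (I := M.E \ H)
        (by simp [diff_subset])).mp hcoind
      rwa [diff_diff_cancel_left hF.subset_ground] at this
    have : M.closure H = M.E := (Matroid.spanning_iff_closure_eq).mp hsp
    exact hne (by rw [← hF.closure, this])
  · intro D hD
    obtain ⟨e, heD⟩ := exists_of_ssubset hD
    have heE : e ∈ M.E := heD.1.1
    have heH : e ∉ H := heD.1.2
    have hHe : H ∪ {e} ⊆ M.E := union_subset hF.subset_ground (by simpa)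
    have hFl : M.IsFlat (M.closure (H ∪ {e})) := aux_flat_closure M _
    have hssub : H ⊂ M.closure (H ∪ {e}) := by
      refine ⟨subset_union_left.trans (M.subset_closure _ hHe), fun hsub ↦ ?_⟩
      exact heH (hsub (M.subset_closure _ hHe (by simp)))
    have hclE : M.closure (H ∪ {e}) = M.E := hmax _ hFl hssub
    have hsp : M.Spanning (H ∪ {e}) := (Matroid.spanning_iff_closure_eq).mpr hclE
    have hsub2 : H ∪ {e} ⊆ M.E \ D := by
      refine union_subset (fun a ha ↦ ⟨hF.subset_ground ha, fun haD ↦ ?_⟩) ?_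
      · exact (hD.1 haD).2 ha
      · simp only [singleton_subset_iff, mem_diff]
        exact ⟨heE, heD.2⟩
    have hDE : D ⊆ M.E := hD.1.trans diff_subset
    exact (Matroid.coindep_iff_compl_spanning hDE).mpr (hsp.superset hsub2 diff_subset)

theorem stmt_18 {α : Type*} (N : Matroid α) (k : ℕ) (hk : 4 ≤ k)
    (hE : N.E.ncard = 2 * k - 2) (hr : N.rank = k - 1) (hr' : N✶.rank = k - 1)
    (X : Set α) (hXcard : X.ncard = k)
    (hXc : N.IsCircuit' X) (hXcc : N.IsCocircuit' X)
    -- the hyperplane-partition (J; {x}, X₂, ..., X_m): its singleton block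
    (J : Set α) (x : α) (hJ : J ⊆ N.E \ X) (hJcard : J.ncard = k - 3)
    (hx : x ∈ X) (hH : N.IsHyperplane (J ∪ {x}))
    -- the cohyperplane-partition (J*; Z₁, ..., Z_p)
    (p : ℕ) (Jst : Set α) (Z : Fin p → Set α)
    (hJst : Jst ⊆ N.E \ X) (hJstcard : Jst.ncard = k - 3)
    (hZne : ∀ i, (Z i).Nonempty)
    (hZdisj : ∀ i j, i ≠ j → Disjoint (Z i) (Z j))
    (hZunion : (⋃ i, Z i) = X)
    (hZco : ∀ i, N✶.IsHyperplane (Jst ∪ Z i))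
    (hJne : Jst ≠ J)
    (hxin : ∃ i, x ∈ Z i ∧ (Z i).ncard = 1)
    (htwo : ∃ i j, i ≠ j ∧ (Z i).ncard = 1 ∧ (Z j).ncard = 1) :
    ∃ W : Set α, N.IsCCI W ∧ W.ncard = k - 2 := by
  classical
  -- basic finiteness facts
  have hEfin : N.E.Finite := by
    by_contra h
    rw [Set.Infinite.ncard (h ∘ id)] at hE
    omega
  have hXE : X ⊆ N.E := hXc.1
  have hXfin : X.Finite := hEfin.subset hXE
  have hYfin : (N.E \ X).Finite := hEfin.diff
  have hYcard : (N.E \ X).ncard = k - 2 := by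
    rw [Set.ncard_diff hXE hXfin, hE, hXcard]; omega
  -- J ∪ Jst = N.E \ X
  have hJfin : J.Finite := hYfin.subset hJ
  have hJstfin : Jst.Finite := hYfin.subset hJst
  have hJU : J ∪ Jst = N.E \ X := by
    obtain ⟨a, haJ, haJst⟩ : ∃ a ∈ J, a ∉ Jst := by
      by_contra h
      push_neg at h
      exact hJne (Set.eq_of_subset_of_ncard_le h (by rw [hJcard, hJstcard]) hJstfin).symm
    refine Set.eq_of_subset_of_ncard_le (union_subset hJ hJst) ?_ hYfin
    have hsub : insert a Jst ⊆ J ∪ Jst := insert_subset (Or.inl haJ) subset_union_right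
    have h1 : (insert a Jst).ncard = k - 2 := by
      rw [Set.ncard_insert_of_notMem haJst hJstfin, hJstcard]; omega
    calc (N.E \ X).ncard = (insert a Jst).ncard := by rw [hYcard, h1]
      _ ≤ (J ∪ Jst).ncard := Set.ncard_le_ncard hsub (hYfin.subset (union_subset hJ hJst))
  -- the singleton block containing x
  obtain ⟨i0, hxi0, hci0⟩ := hxin
  obtain ⟨x', hZx'⟩ := Set.ncard_eq_one.mp hci0
  have hZi0 : Z i0 = {x} := by rw [hZx']; rw [hZx'] at hxi0; simp_all
  -- a second singleton block {z} with z ≠ x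
  obtain ⟨i, j, hij, hci, hcj⟩ := htwo
  obtain ⟨j', hj'ne, hcj'⟩ : ∃ j', j' ≠ i0 ∧ (Z j').ncard = 1 := by
    by_cases h : i = i0
    · exact ⟨j, fun hji ↦ hij (h ▸ hji ▸ rfl), hcj⟩
    · exact ⟨i, h, hci⟩
  obtain ⟨z, hZj'⟩ := Set.ncard_eq_one.mp hcj'
  have hzX : z ∈ X := by
    rw [← hZunion]; exact mem_iUnion.mpr ⟨j', by rw [hZj']; rfl⟩
  have hzx : z ≠ x :=
    (hZdisj j' i0 hj'ne).ne_of_mem (by rw [hZj']; rfl) (by rw [hZi0]; rfl)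
  -- the circuit and cocircuit
  have hK : N.IsCocircuit' (N.E \ (J ∪ {x})) := aux_compl_hyperplane_isCocircuit N _ hH
  have hC : N.IsCircuit' (N.E \ (Jst ∪ {z})) := by
    have h := aux_compl_hyperplane_isCocircuit N✶ _ (hZj' ▸ hZco j')
    rwa [Matroid.IsCocircuit', Matroid.dual_dual, Matroid.dual_ground] at h
  refine ⟨X \ {x, z}, ⟨_, _, hC, hK, ?_⟩, ?_⟩
  · have hmem : ∀ a, a ∈ J ∪ Jst ↔ a ∈ N.E \ X := fun a ↦ by rw [hJU]
    ext a
    have := hmem a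
    have haE : a ∈ X → a ∈ N.E := fun h ↦ hXE h
    simp only [mem_diff, mem_inter_iff, mem_union, mem_singleton_iff, mem_insert_iff] at *
    constructor
    · rintro ⟨haX, hne⟩
      push_neg at hne
      have haE' := haE haX
      have : ¬ (a ∈ J ∨ a ∈ Jst) := fun h ↦ (this.mp h).2 haX
      push_neg at this
      exact ⟨⟨haE', fun h ↦ h.elim this.2 hne.2⟩, haE', fun h ↦ h.elim this.1 hne.1⟩
    · rintro ⟨⟨haE', h1⟩, -, h2⟩
      push_neg at h1 h2
      have haX : a ∈ X := by
        by_contra haX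
        exact (this.mpr ⟨haE', haX⟩).elim h2.1 h1.1
      exact ⟨haX, fun h ↦ h.elim h2.2 h1.2⟩
  · have hsub : {x, z} ⊆ X := by
      rintro a (rfl | rfl)
      exacts [hx, hzX]
    rw [Set.ncard_diff hsub (hXfin.subset hsub), hXcard,
      Set.ncard_pair (Ne.symm hzx)]
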